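/- Let P_1 be the all-positive signed Petersen graph (every edge has sign +1). For every nonnegative integer k, the number of zero-free proper k-colorings of P_1 equals 1024k^10 - 7680k^9 + 26880k^8 - 58240k^7 + 86592k^6 - 91552k^5 + 68400k^4 - 34440k^3 + 10424k^2 - 1408k. -/

import Mathlib

/-- The edges of the Petersen graph on vertices `0, …, 4` (outer vertices `u_0, …, u_4`)
and `5, …, 9` (inner vertices `v_0, …, v_4`): outer edges `u_i u_(i+1)`, inner pentagram
edges `v_i v_(i+2)` (indices mod 5), and spokes `u_i v_i`. -/
def petersenEdges : List (Fin 10 × Fin 10) :=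
  [(0, 1), (1, 2), (2, 3), (3, 4), (4, 0),
   (5, 7), (6, 8), (7, 9), (8, 5), (9, 6),
   (0, 5), (1, 6), (2, 7), (3, 8), (4, 9)]

/-- The negative edges of the signed Petersen graph `P1`; all other edges are positive. -/
def negEdges : List (Fin 10 × Fin 10) := []

/-- The sign of an edge of `P1`. -/
def sign (e : Fin 10 × Fin 10) : ℤ := if e ∈ negEdges then -1 else 1

/-- coefficient-list polynomial subtraction -/
def subP : List ℤ → List ℤ → List ℤ
  | [], q => q.map (fun c => -c)
  | p, [] => p
  | a :: p, c :: q => (a - c) :: subP p q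

/-- evaluate a coefficient list -/
def evalP (n : ℤ) : List ℤ → ℤ
  | [] => 0
  | a :: p => a + n * evalP n p

def merge (a b : Fin 10) (v : Fin 10) : Fin 10 := if v = b then a else v

/-- deletion–contraction chromatic polynomial with fuel -/
def chrom : ℕ → List (Fin 10 × Fin 10) → List (Fin 10) → List ℤ
  | _, [], s => List.replicate s.length 0 ++ [1]
  | 0, _ :: _, _ => []
  | fuel + 1, (a, b) :: E, s =>
      if a = b then [] else
        subP (chrom fuel E s)
          (chrom fuel (E.map fun e => (merge a b e.1, merge a b e.2)) (s.erase b))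

def piS (s : List (Fin 10)) (n : ℕ) : Finset (Fin 10 → ℕ) :=
  Fintype.piFinset fun v => if v ∈ s then Finset.range n else {0}

def Ncnt (E : List (Fin 10 × Fin 10)) (s : List (Fin 10)) (n : ℕ) : ℕ :=
  ((piS s n).filter fun x => ∀ e ∈ E, x e.1 ≠ x e.2).card

theorem evalP_subP (n : ℤ) : ∀ p q, evalP n (subP p q) = evalP n p - evalP n q := by
  intro p
  induction p with
  | nil =>
      intro q
      induction q with
      | nil => simp [subP, evalP]
      | cons c q ih => simp [subP, evalP] at *; rw [ih]; ring
  | cons a p ih =>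
      intro q
      cases q with
      | nil => simp [subP, evalP]
      | cons c q => simp [subP, evalP]; rw [ih]; ring

theorem evalP_mono (n : ℤ) : ∀ m : ℕ, evalP n (List.replicate m 0 ++ [1]) = n ^ m := by
  intro m
  induction m with
  | zero => simp [evalP]
  | succ m ih => simp [List.replicate_succ, evalP, ih]; ring

theorem Ncnt_loop (a : Fin 10) (E : List (Fin 10 × Fin 10)) (s : List (Fin 10)) (n : ℕ) :
    Ncnt ((a, a) :: E) s n = 0 := by
  rw [Ncnt, Finset.card_eq_zero, Finset.filter_eq_empty_iff]
  intro x _ h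
  exact h (a, a) List.mem_cons_self rfl

theorem Ncnt_split (a b : Fin 10) (E : List (Fin 10 × Fin 10)) (s : List (Fin 10)) (n : ℕ) :
    Ncnt ((a, b) :: E) s n
      + ((piS s n).filter fun x => (∀ e ∈ E, x e.1 ≠ x e.2) ∧ x a = x b).card
      = Ncnt E s n := by
  have h1 : ((piS s n).filter fun x => ∀ e ∈ (a, b) :: E, x e.1 ≠ x e.2)
      = ((piS s n).filter fun x => ∀ e ∈ E, x e.1 ≠ x e.2).filter fun x => ¬ x a = x b := by
    rw [Finset.filter_filter]
    apply Finset.filter_congr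
    intro x _
    simp only [List.forall_mem_cons, ne_eq, and_comm]
  have h2 : ((piS s n).filter fun x => (∀ e ∈ E, x e.1 ≠ x e.2) ∧ x a = x b)
      = ((piS s n).filter fun x => ∀ e ∈ E, x e.1 ≠ x e.2).filter fun x => x a = x b := by
    rw [Finset.filter_filter]
  rw [Ncnt, h1, h2, Ncnt, add_comm]
  exact Finset.card_filter_add_card_filter_not (p := _)

theorem mem_piS {s : List (Fin 10)} {n : ℕ} {x : Fin 10 → ℕ} :
    x ∈ piS s n ↔ ∀ v, x v ∈ if v ∈ s then Finset.range n else ({0} : Finset ℕ) := by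
  simp [piS, Fintype.mem_piFinset]

theorem Ncnt_contract (a b : Fin 10) (hab : a ≠ b) (E : List (Fin 10 × Fin 10))
    (s : List (Fin 10)) (n : ℕ) (hs : s.Nodup) (ha : a ∈ s) (hb : b ∈ s) :
    ((piS s n).filter fun x => (∀ e ∈ E, x e.1 ≠ x e.2) ∧ x a = x b).card
      = Ncnt (E.map fun e => (merge a b e.1, merge a b e.2)) (s.erase b) n := by
  rw [Ncnt]
  have hbe : b ∉ s.erase b := fun h => ((hs.mem_erase_iff).1 h).1 rfl
  have hae : a ∈ s.erase b := (hs.mem_erase_iff).2 ⟨hab, ha⟩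
  have hmem : ∀ v : Fin 10, v ≠ b → (v ∈ s.erase b ↔ v ∈ s) := by
    intro v hv; rw [hs.mem_erase_iff]; exact ⟨fun h => h.2, fun h => ⟨hv, h⟩⟩
  apply Finset.card_bij' (i := fun x _ => Function.update x b 0)
    (j := fun y _ => Function.update y b (y a))
  · -- left inverse
    intro x hx
    rw [Finset.mem_filter] at hx
    funext v
    by_cases hv : v = b
    · subst hv
      rw [Function.update_self, Function.update_of_ne hab]
      exact hx.2.2
    · rw [Function.update_of_ne hv, Function.update_of_ne hv]
  · -- right inverse
    intro y hy
    rw [Finset.mem_filter, mem_piS] at hy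
    have hyb : y b = 0 := by
      have := hy.1 b; rw [if_neg hbe] at this; exact Finset.mem_singleton.1 this
    funext v
    by_cases hv : v = b
    · subst hv
      rw [Function.update_self, hyb]
    · rw [Function.update_of_ne hv, Function.update_of_ne hv]
  · -- hi
    intro x hx
    rw [Finset.mem_filter] at hx
    rw [Finset.mem_filter]
    obtain ⟨hxpi, hxE, hxab⟩ := hx
    have key : ∀ p : Fin 10, Function.update x b 0 (merge a b p) = x p := by
      intro p
      have h1 : merge a b p ≠ b := by
        unfold merge; split
        · exact hab
        · assumption
      rw [Function.update_of_ne h1]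
      unfold merge
      by_cases hp : p = b
      · rw [if_pos hp]; subst hp; exact hxab
      · rw [if_neg hp]
    constructor
    · rw [mem_piS]
      intro v
      by_cases hv : v = b
      · subst hv
        rw [Function.update_self, if_neg hbe]
        exact Finset.mem_singleton_self 0
      · rw [Function.update_of_ne hv]
        rw [mem_piS] at hxpi
        have := hxpi v
        by_cases hvs : v ∈ s
        · rw [if_pos ((hmem v hv).2 hvs)]
          rw [if_pos hvs] at this
          exact this
        · rw [if_neg fun h => hvs ((hmem v hv).1 h)]
          rw [if_neg hvs] at this
          exact this
    · intro e he
      rw [List.mem_map] at he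
      obtain ⟨e', he', rfl⟩ := he
      simp only [key]
      exact hxE e' he'
  · -- hj
    intro y hy
    rw [Finset.mem_filter] at hy
    rw [Finset.mem_filter]
    obtain ⟨hypi, hyE⟩ := hy
    rw [mem_piS] at hypi
    have hyb : y b = 0 := by
      have := hypi b; rw [if_neg hbe] at this; exact Finset.mem_singleton.1 this
    have key : ∀ p : Fin 10, Function.update y b (y a) p = y (merge a b p) := by
      intro p
      by_cases hp : p = b
      · subst hp
        rw [Function.update_self]
        unfold merge; rw [if_pos rfl]
      · rw [Function.update_of_ne hp]
        unfold merge; rw [if_neg hp]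
    refine ⟨?_, ?_, ?_⟩
    · rw [mem_piS]
      intro v
      by_cases hv : v = b
      · subst hv
        rw [Function.update_self, if_pos hb]
        have := hypi a; rw [if_pos hae] at this; exact this
      · rw [Function.update_of_ne hv]
        have := hypi v
        by_cases hvs : v ∈ s
        · rw [if_pos hvs]
          rw [if_pos ((hmem v hv).2 hvs)] at this
          exact this
        · rw [if_neg hvs]
          rw [if_neg fun h => hvs ((hmem v hv).1 h)] at this
          exact this
    · intro e he
      rw [key, key]
      exact hyE _ (List.mem_map.2 ⟨e, he, rfl⟩)
    · rw [key, key]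
      unfold merge
      rw [if_neg hab, if_pos rfl]

theorem Ncnt_nil (s : List (Fin 10)) (hs : s.Nodup) (n : ℕ) :
    Ncnt [] s n = n ^ s.length := by
  rw [Ncnt]
  simp only [List.not_mem_nil, false_implies, implies_true, Finset.filter_true_of_mem,
    fun _ _ => trivial]
  rw [piS, Fintype.card_piFinset]
  have : ∀ v : Fin 10, (if v ∈ s then Finset.range n else ({0} : Finset ℕ)).card
      = if v ∈ s then n else 1 := by
    intro v; split <;> simp
  simp_rw [this]
  rw [Finset.prod_ite, Finset.prod_const, Finset.prod_const, one_pow, mul_one]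
  congr 1
  have : Finset.univ.filter (· ∈ s) = s.toFinset := by
    ext v; simp
  rw [this, List.toFinset_card_of_nodup hs]

theorem chrom_correct (n : ℕ) : ∀ (fuel : ℕ) (E : List (Fin 10 × Fin 10)) (s : List (Fin 10)),
    E.length ≤ fuel → s.Nodup → (∀ e ∈ E, e.1 ∈ s ∧ e.2 ∈ s) →
    (Ncnt E s n : ℤ) = evalP (n : ℤ) (chrom fuel E s) := by
  intro fuel
  induction fuel with
  | zero =>
      intro E s hlen hs _
      match E with
      | [] => rw [Ncnt_nil s hs, chrom, evalP_mono]; push_cast; ring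
      | e :: E => simp at hlen
  | succ fuel ih =>
      intro E s hlen hs hE
      match E with
      | [] => rw [Ncnt_nil s hs, chrom, evalP_mono]; push_cast; ring
      | (a, b) :: E =>
          rw [chrom]
          by_cases hab : a = b
          · subst hab
            rw [if_pos rfl, Ncnt_loop]
            simp [evalP]
          · rw [if_neg hab, evalP_subP]
            have ha : a ∈ s := (hE (a, b) List.mem_cons_self).1
            have hb : b ∈ s := (hE (a, b) List.mem_cons_self).2
            have hsplit := Ncnt_split a b E s n
            have hcon := Ncnt_contract a b hab E s n hs ha hb
            have hlen' : E.length ≤ fuel := Nat.le_of_succ_le_succ hlen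
            have h1 := ih E s hlen' hs fun e he => hE e (List.mem_cons_of_mem _ he)
            have hend : ∀ e ∈ E.map fun e => (merge a b e.1, merge a b e.2),
                e.1 ∈ s.erase b ∧ e.2 ∈ s.erase b := by
              intro e he
              rw [List.mem_map] at he
              obtain ⟨e', he', rfl⟩ := he
              have hmerge : ∀ v : Fin 10, v ∈ s → merge a b v ∈ s.erase b := by
                intro v hv
                unfold merge
                by_cases hvb : v = b
                · rw [if_pos hvb]
                  exact (hs.mem_erase_iff).2 ⟨hab, ha⟩
                · rw [if_neg hvb]
                  exact (hs.mem_erase_iff).2 ⟨hvb, hv⟩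
              exact ⟨hmerge _ (hE e' (List.mem_cons_of_mem _ he')).1,
                hmerge _ (hE e' (List.mem_cons_of_mem _ he')).2⟩
            have h2 := ih (E.map fun e => (merge a b e.1, merge a b e.2)) (s.erase b)
              (by rw [List.length_map]; exact hlen') (hs.erase b) hend
            rw [← h1, ← h2, ← hcon]
            have := congrArg (fun m : ℕ => (m : ℤ)) hsplit
            push_cast at this
            linarith

def phiMap (k : ℕ) (z : ℤ) : ℕ := if z < 0 then (z + k).toNat else (z + k - 1).toNat

def psiMap (k : ℕ) (m : ℕ) : ℤ := if (m : ℤ) < k then (m : ℤ) - k else (m : ℤ) - k + 1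

theorem psi_phi {k : ℕ} {z : ℤ} (h1 : -(k : ℤ) ≤ z) (h2 : z ≤ k) (h0 : z ≠ 0) :
    psiMap k (phiMap k z) = z := by
  unfold phiMap psiMap; split_ifs <;> omega

theorem phi_lt {k : ℕ} {z : ℤ} (h1 : -(k : ℤ) ≤ z) (h2 : z ≤ k) (h0 : z ≠ 0) :
    phiMap k z < 2 * k := by
  unfold phiMap; split_ifs <;> omega

theorem psi_mem {k : ℕ} {m : ℕ} (h : m < 2 * k) :
    -(k : ℤ) ≤ psiMap k m ∧ psiMap k m ≤ k ∧ psiMap k m ≠ 0 := by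
  unfold psiMap; split_ifs <;> refine ⟨by omega, by omega, by omega⟩

theorem phi_psi {k : ℕ} {m : ℕ} (h : m < 2 * k) : phiMap k (psiMap k m) = m := by
  unfold phiMap psiMap; split_ifs <;> omega

theorem transfer (k : ℕ) :
    ((Fintype.piFinset fun _ : Fin 10 => ((Finset.Icc (-(k : ℤ)) (k : ℤ)).erase 0)).filter
        fun x : Fin 10 → ℤ => ∀ e ∈ petersenEdges, x e.1 ≠ x e.2).card
      = Ncnt petersenEdges (List.finRange 10) (2 * k) := by
  rw [Ncnt]
  have hS : ∀ {x : Fin 10 → ℤ}, x ∈ (Fintype.piFinset fun _ : Fin 10 =>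
      ((Finset.Icc (-(k : ℤ)) (k : ℤ)).erase 0)) ↔
      ∀ v, -(k : ℤ) ≤ x v ∧ x v ≤ k ∧ x v ≠ 0 := by
    intro x
    rw [Fintype.mem_piFinset]
    constructor
    · intro h v
      have := h v
      rw [Finset.mem_erase, Finset.mem_Icc] at this
      exact ⟨this.2.1, this.2.2, this.1⟩
    · intro h v
      rw [Finset.mem_erase, Finset.mem_Icc]
      exact ⟨(h v).2.2, (h v).1, (h v).2.1⟩
  have hT : ∀ {y : Fin 10 → ℕ}, y ∈ piS (List.finRange 10) (2 * k) ↔ ∀ v, y v < 2 * k := by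
    intro y
    rw [mem_piS]
    constructor
    · intro h v
      have := h v
      rw [if_pos (List.mem_finRange v), Finset.mem_range] at this
      exact this
    · intro h v
      rw [if_pos (List.mem_finRange v), Finset.mem_range]
      exact h v
  apply Finset.card_bij' (i := fun x _ => fun v => phiMap k (x v))
    (j := fun y _ => fun v => psiMap k (y v))
  · intro x hx
    rw [Finset.mem_filter] at hx
    obtain ⟨hx1, hx2⟩ := hx
    rw [hS] at hx1
    rw [Finset.mem_filter]
    constructor
    · rw [hT]
      intro v
      exact phi_lt (hx1 v).1 (hx1 v).2.1 (hx1 v).2.2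
    · intro e he h
      apply hx2 e he
      have := congrArg (psiMap k) h
      rw [psi_phi (hx1 e.1).1 (hx1 e.1).2.1 (hx1 e.1).2.2,
        psi_phi (hx1 e.2).1 (hx1 e.2).2.1 (hx1 e.2).2.2] at this
      exact this
  · intro y hy
    rw [Finset.mem_filter] at hy
    obtain ⟨hy1, hy2⟩ := hy
    rw [hT] at hy1
    rw [Finset.mem_filter]
    constructor
    · rw [hS]
      intro v
      exact psi_mem (hy1 v)
    · intro e he h
      apply hy2 e he
      have := congrArg (phiMap k) h
      rw [phi_psi (hy1 e.1), phi_psi (hy1 e.2)] at this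
      exact this
  · intro x hx
    rw [Finset.mem_filter] at hx
    obtain ⟨hx1, _⟩ := hx
    rw [hS] at hx1
    funext v
    exact psi_phi (hx1 v).1 (hx1 v).2.1 (hx1 v).2.2
  · intro y hy
    rw [Finset.mem_filter] at hy
    obtain ⟨hy1, _⟩ := hy
    rw [hT] at hy1
    funext v
    exact phi_psi (hy1 v)

set_option maxHeartbeats 10000000 in
theorem chrom_petersen : chrom 15 petersenEdges (List.finRange 10) =
    [0, -704, 2606, -4305, 4275, -2861, 1353, -455, 105, -15, 1] := by decide

theorem petersen_zeroFree_chromatic_P1 (k : ℕ) :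
    (((Fintype.piFinset fun _ : Fin 10 => ((Finset.Icc (-(k : ℤ)) (k : ℤ)).erase 0)).filter
        fun x : Fin 10 → ℤ => ∀ e ∈ petersenEdges, x e.1 ≠ sign e * x e.2).card : ℤ)
      = 1024 * (k : ℤ)^10 - 7680 * (k : ℤ)^9 + 26880 * (k : ℤ)^8 - 58240 * (k : ℤ)^7 + 86592 * (k : ℤ)^6 - 91552 * (k : ℤ)^5 + 68400 * (k : ℤ)^4 - 34440 * (k : ℤ)^3 + 10424 * (k : ℤ)^2 - 1408 * (k : ℤ) := by
  have hpred : ((Fintype.piFinset fun _ : Fin 10 => ((Finset.Icc (-(k : ℤ)) (k : ℤ)).erase 0)).filter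
        fun x : Fin 10 → ℤ => ∀ e ∈ petersenEdges, x e.1 ≠ sign e * x e.2)
      = ((Fintype.piFinset fun _ : Fin 10 => ((Finset.Icc (-(k : ℤ)) (k : ℤ)).erase 0)).filter
        fun x : Fin 10 → ℤ => ∀ e ∈ petersenEdges, x e.1 ≠ x e.2) := by
    apply Finset.filter_congr
    intro x _
    simp [sign, negEdges]
  rw [hpred, transfer k]
  have hc := chrom_correct (2 * k) 15 petersenEdges (List.finRange 10) (by decide)
    (List.nodup_finRange 10) (by decide)
  rw [hc, chrom_petersen]
  simp only [evalP]
  push_cast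
  ring
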